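/- Let (Ω, F, P) be a probability space, and let v : ℝ → ℝ be convex, nondecreasing, and satisfy v(t) ≥ t for all t ∈ ℝ. For an essentially bounded real random variable X define ρ(X) = inf_{η∈ℝ}{ η + E[v(X − η)] }. Then: (i) ρ(X) is a well-defined real number with ρ(X) ≥ E[X]; (ii) (monotonicity) if X ≤ Y almost surely then ρ(X) ≤ ρ(Y); (iii) (translation invariance) ρ(X + c·1) = ρ(X) + c for every c ∈ ℝ; (iv) (convexity) ρ(λX + (1−λ)Y) ≤ λρ(X) + (1−λ)ρ(Y) for every λ ∈ [0, 1] and all essentially bounded X, Y. -/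

import Mathlib

open MeasureTheory Set

section oceAux

variable {Ω : Type*} [MeasurableSpace Ω] {P : Measure Ω} [IsProbabilityMeasure P]

lemma oce_ae_bound {X : Ω → ℝ} (hX : MemLp X ⊤ P) :
    ∀ᵐ ω ∂P, ‖X ω‖ ≤ (eLpNormEssSup X P).toReal := by
  have h := enorm_ae_le_eLpNormEssSup X P
  have hfin : eLpNormEssSup X P ≠ ⊤ := by
    have := hX.2
    rwa [eLpNorm_exponent_top, lt_top_iff_ne_top] at this
  filter_upwards [h] with ω hω
  have : ((‖X ω‖₊ : ENNReal)).toReal ≤ (eLpNormEssSup X P).toReal :=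
    ENNReal.toReal_mono hfin hω
  simpa using this

lemma oce_integrable {v : ℝ → ℝ} (hmono : Monotone v) {X : Ω → ℝ}
    (hX : MemLp X ⊤ P) (η : ℝ) : Integrable (fun ω => v (X ω - η)) P := by
  set C := (eLpNormEssSup X P).toReal with hC
  have haesm : AEStronglyMeasurable (fun ω => v (X ω - η)) P := by
    have hXm : AEMeasurable (fun ω => X ω - η) P := hX.1.aemeasurable.sub aemeasurable_const
    exact (hmono.measurable.comp_aemeasurable hXm).aestronglyMeasurable
  have hbd : ∀ᵐ ω ∂P, ‖v (X ω - η)‖ ≤ max |v (C - η)| |v (-C - η)| := by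
    filter_upwards [oce_ae_bound hX] with ω hω
    have habs := abs_le.mp (by simpa [Real.norm_eq_abs] using hω)
    have hu : v (X ω - η) ≤ v (C - η) := hmono (by linarith [habs.2])
    have hl : v (-C - η) ≤ v (X ω - η) := hmono (by linarith [habs.1])
    rw [Real.norm_eq_abs, abs_le]
    constructor
    · exact le_trans (neg_le_neg (le_max_right _ _)) (le_trans (neg_abs_le _) hl)
    · exact le_trans hu (le_trans (le_abs_self _) (le_max_left _ _))
  exact (memLp_top_of_bound haesm _ hbd).integrable le_top

lemma oce_lb {v : ℝ → ℝ} (hmono : Monotone v) (hts : ∀ t : ℝ, t ≤ v t) {X : Ω → ℝ}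
    (hX : MemLp X ⊤ P) (η : ℝ) :
    (∫ ω, X ω ∂P) ≤ η + ∫ ω, v (X ω - η) ∂P := by
  have hXi : Integrable X P := hX.integrable le_top
  have h1 : Integrable (fun ω => X ω - η) P := hXi.sub (integrable_const η)
  have h2 : (∫ ω, (X ω - η) ∂P) ≤ ∫ ω, v (X ω - η) ∂P :=
    integral_mono h1 (oce_integrable hmono hX η) fun ω => hts _
  have h3 : (∫ ω, (X ω - η) ∂P) = (∫ ω, X ω ∂P) - η := by
    rw [integral_sub hXi (integrable_const η), integral_const]
    simp
  linarith [h2, h3.symm.le]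

lemma oce_bddBelow {v : ℝ → ℝ} (hmono : Monotone v) (hts : ∀ t : ℝ, t ≤ v t) {X : Ω → ℝ}
    (hX : MemLp X ⊤ P) :
    BddBelow (range fun η : ℝ => η + ∫ ω, v (X ω - η) ∂P) := by
  refine ⟨∫ ω, X ω ∂P, ?_⟩
  rintro x ⟨η, rfl⟩
  exact oce_lb hmono hts hX η

end oceAux

/-- The optimized-certainty-equivalent functional `ρ(X) = inf_η { η + E[v(X − η)] }`, built
from a convex, nondecreasing `v` with `v(t) ≥ t`, is a convex risk measure (loss convention):
it is finite with `ρ(X) ≥ E[X]`, monotone, translation invariant, and convex. -/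
theorem stmt_6 {Ω : Type*} [MeasurableSpace Ω] (P : Measure Ω) [IsProbabilityMeasure P]
    (v : ℝ → ℝ) (hconv : ConvexOn ℝ univ v) (hmono : Monotone v) (hts : ∀ t : ℝ, t ≤ v t)
    (ρ : (Ω → ℝ) → ℝ)
    (hρ : ∀ X : Ω → ℝ, ρ X = ⨅ η : ℝ, (η + ∫ ω, v (X ω - η) ∂P)) :
    -- (i) well-defined, with ρ(X) ≥ E[X]
    (∀ X : Ω → ℝ, MemLp X ⊤ P →
      BddBelow (range fun η : ℝ => η + ∫ ω, v (X ω - η) ∂P) ∧ (∫ ω, X ω ∂P) ≤ ρ X) ∧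
    -- (ii) monotonicity
    (∀ X Y : Ω → ℝ, MemLp X ⊤ P → MemLp Y ⊤ P → (∀ᵐ ω ∂P, X ω ≤ Y ω) → ρ X ≤ ρ Y) ∧
    -- (iii) translation invariance
    (∀ X : Ω → ℝ, MemLp X ⊤ P → ∀ c : ℝ, ρ (fun ω => X ω + c) = ρ X + c) ∧
    -- (iv) convexity
    (∀ X Y : Ω → ℝ, MemLp X ⊤ P → MemLp Y ⊤ P → ∀ t ∈ Icc (0 : ℝ) 1,
      ρ (fun ω => t * X ω + (1 - t) * Y ω) ≤ t * ρ X + (1 - t) * ρ Y) := by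
  refine ⟨?_, ?_, ?_, ?_⟩
  · -- (i)
    intro X hX
    refine ⟨oce_bddBelow hmono hts hX, ?_⟩
    rw [hρ X]
    exact le_ciInf (oce_lb hmono hts hX)
  · -- (ii)
    intro X Y hX hY hXY
    rw [hρ X, hρ Y]
    refine ciInf_mono (oce_bddBelow hmono hts hX) fun η => ?_
    refine add_le_add_right ?_ η
    refine integral_mono_ae (oce_integrable hmono hX η) (oce_integrable hmono hY η) ?_
    filter_upwards [hXY] with ω h
    exact hmono (by linarith)
  · -- (iii)
    intro X hX c
    rw [hρ (fun ω => X ω + c), hρ X]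
    have hstep : ∀ η : ℝ, η + ∫ ω, v (X ω + c - η) ∂P
        = ((η - c) + ∫ ω, v (X ω - (η - c)) ∂P) + c := by
      intro η
      have : (fun ω => v (X ω + c - η)) = fun ω => v (X ω - (η - c)) := by
        funext ω; ring_nf
      rw [this]; ring
    have hrange : range (fun η : ℝ => η + ∫ ω, v (X ω + c - η) ∂P)
        = range (fun η : ℝ => (η + ∫ ω, v (X ω - η) ∂P) + c) := by
      ext x
      constructor
      · rintro ⟨η, rfl⟩
        refine ⟨η - c, ?_⟩
        show ((η - c) + ∫ ω, v (X ω - (η - c)) ∂P) + c = η + ∫ ω, v (X ω + c - η) ∂P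
        rw [hstep η]
      · rintro ⟨η, rfl⟩
        refine ⟨η + c, ?_⟩
        show (η + c) + ∫ ω, v (X ω + c - (η + c)) ∂P = (η + ∫ ω, v (X ω - η) ∂P) + c
        rw [hstep (η + c)]
        simp
    have hmap : ((⨅ η : ℝ, (η + ∫ ω, v (X ω - η) ∂P)) + c)
        = ⨅ η : ℝ, ((η + ∫ ω, v (X ω - η) ∂P) + c) := by
      exact Monotone.map_ciInf_of_continuousAt (f := fun x : ℝ => x + c)
        (continuous_add_right c).continuousAt (fun a b hab => add_le_add_left hab c)
        (oce_bddBelow hmono hts hX)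
    rw [iInf, hrange, ← iInf, ← hmap]
  · -- (iv)
    intro X Y hX hY t ht
    obtain ⟨ht0, ht1⟩ := ht
    have hs0 : (0:ℝ) ≤ 1 - t := by linarith
    have hZ : MemLp (fun ω => t * X ω + (1 - t) * Y ω) ⊤ P :=
      (hX.const_mul t).add (hY.const_mul (1 - t))
    rw [hρ (fun ω => t * X ω + (1 - t) * Y ω), hρ X, hρ Y]
    set GX : ℝ → ℝ := fun η => η + ∫ ω, v (X ω - η) ∂P with hGX
    set GY : ℝ → ℝ := fun η => η + ∫ ω, v (Y ω - η) ∂P with hGY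
    set GZ : ℝ → ℝ := fun η => η + ∫ ω, v (t * X ω + (1 - t) * Y ω - η) ∂P with hGZ
    have key : ∀ η₁ η₂ : ℝ, (⨅ η, GZ η) ≤ t * GX η₁ + (1 - t) * GY η₂ := by
      intro η₁ η₂
      have h1 : (⨅ η, GZ η) ≤ GZ (t * η₁ + (1 - t) * η₂) :=
        ciInf_le (oce_bddBelow hmono hts hZ) _
      refine le_trans h1 ?_
      have hint : (∫ ω, v (t * X ω + (1 - t) * Y ω - (t * η₁ + (1 - t) * η₂)) ∂P)
          ≤ ∫ ω, (t * v (X ω - η₁) + (1 - t) * v (Y ω - η₂)) ∂P := by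
        refine integral_mono (oce_integrable hmono hZ _)
          (((oce_integrable hmono hX η₁).const_mul t).add
            ((oce_integrable hmono hY η₂).const_mul (1 - t))) fun ω => ?_
        have harg : t * X ω + (1 - t) * Y ω - (t * η₁ + (1 - t) * η₂)
            = t * (X ω - η₁) + (1 - t) * (Y ω - η₂) := by ring
        rw [harg]
        exact hconv.2 (mem_univ (X ω - η₁)) (mem_univ (Y ω - η₂)) ht0 hs0 (by ring)
      have hsplit : (∫ ω, (t * v (X ω - η₁) + (1 - t) * v (Y ω - η₂)) ∂P)
          = t * (∫ ω, v (X ω - η₁) ∂P) + (1 - t) * (∫ ω, v (Y ω - η₂) ∂P) := by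
        rw [integral_add ((oce_integrable hmono hX η₁).const_mul t)
          ((oce_integrable hmono hY η₂).const_mul (1 - t)),
          integral_const_mul, integral_const_mul]
      simp only [hGZ, hGX, hGY]
      calc t * η₁ + (1 - t) * η₂ + ∫ ω, v (t * X ω + (1 - t) * Y ω - (t * η₁ + (1 - t) * η₂)) ∂P
          ≤ t * η₁ + (1 - t) * η₂ +
            (t * (∫ ω, v (X ω - η₁) ∂P) + (1 - t) * (∫ ω, v (Y ω - η₂) ∂P)) := by
            rw [← hsplit]; exact add_le_add_right hint _
        _ = t * (η₁ + ∫ ω, v (X ω - η₁) ∂P) + (1 - t) * (η₂ + ∫ ω, v (Y ω - η₂) ∂P) := by ring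
    have hmapX : t * (⨅ η, GX η) = ⨅ η, t * GX η :=
      Monotone.map_ciInf_of_continuousAt (f := fun x : ℝ => t * x)
        (continuous_const.mul continuous_id).continuousAt
        (fun a b hab => mul_le_mul_of_nonneg_left hab ht0)
        (oce_bddBelow hmono hts hX)
    have hmapY : (1 - t) * (⨅ η, GY η) = ⨅ η, (1 - t) * GY η :=
      Monotone.map_ciInf_of_continuousAt (f := fun x : ℝ => (1 - t) * x)
        (continuous_const.mul continuous_id).continuousAt
        (fun a b hab => mul_le_mul_of_nonneg_left hab hs0)
        (oce_bddBelow hmono hts hY)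
    have h1 : ∀ η₁ : ℝ, (⨅ η, GZ η) - t * GX η₁ ≤ (1 - t) * (⨅ η, GY η) := by
      intro η₁
      rw [hmapY]
      refine le_ciInf fun η₂ => ?_
      linarith [key η₁ η₂]
    have h2 : (⨅ η, GZ η) - (1 - t) * (⨅ η, GY η) ≤ t * (⨅ η, GX η) := by
      rw [hmapX]
      refine le_ciInf fun η₁ => ?_
      linarith [h1 η₁]
    linarith [h2]
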